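/- arXiv:1103.2612 — 2 statements merged into one kernel-verified Lean document; each statement's English description precedes it below -/
import Mathlib

section
/- Let S ⊆ ℝⁿ be a full-dimensional simplex with vertices v_0, …, v_n and diameter δ = max{‖x − x′‖ : x, x′ ∈ S}, and let φ : ℝⁿ → ℝ be of class C² on a neighborhood of S. Let A ∈ ℝⁿ (a row vector) and a ∈ ℝ be the unique affine interpolant of φ at the vertices, i.e. A·v_i + a = φ(v_i) for all i ∈ {0,…,n}. Then for every x ∈ S, |φ(x) − A·x − a| ≤ (1/2) (max_{y∈S} ρ(H(φ)(y))) δ², where H(φ) denotes the Hessian matrix of φ and ρ(·) the spectral radius. -/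
open Matrix Set

/-- The spectral radius of a real matrix: the largest absolute value of an element
of its (real) spectrum.  For the (symmetric) Hessian matrices considered here this
is the usual spectral radius. -/
noncomputable def specRad {n : ℕ} (M : Matrix (Fin n) (Fin n) ℝ) : ℝ :=
  sSup ((fun μ => |μ|) '' spectrum ℝ M)

/-- The Hessian matrix of `φ : ℝⁿ → ℝ` at `x`, with entries the second partial
derivatives of `φ`. -/
noncomputable def hessMat {n : ℕ} (φ : EuclideanSpace ℝ (Fin n) → ℝ)
    (x : EuclideanSpace ℝ (Fin n)) : Matrix (Fin n) (Fin n) ℝ :=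
  fun i j => iteratedFDeriv ℝ 2 φ x
    ![EuclideanSpace.single i (1 : ℝ), EuclideanSpace.single j (1 : ℝ)]

open scoped RealInnerProductSpace

lemma specRad_bddAbove {n : ℕ} (M : Matrix (Fin n) (Fin n) ℝ) :
    BddAbove ((fun μ => |μ|) '' spectrum ℝ M) :=
  ((M.finite_spectrum).image _).bddAbove

lemma abs_le_specRad {n : ℕ} {M : Matrix (Fin n) (Fin n) ℝ} {μ : ℝ} (h : μ ∈ spectrum ℝ M) :
    |μ| ≤ specRad M :=
  le_csSup (specRad_bddAbove M) ⟨μ, h, rfl⟩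

lemma specRad_nonneg {n : ℕ} (M : Matrix (Fin n) (Fin n) ℝ) : 0 ≤ specRad M := by
  rcases (spectrum ℝ M).eq_empty_or_nonempty with h | ⟨μ, hμ⟩
  · simp [specRad, h, Real.sSup_empty]
  · exact le_trans (abs_nonneg μ) (abs_le_specRad hμ)

lemma abs_inner_le_specRad {n : ℕ} (M : Matrix (Fin n) (Fin n) ℝ) (hM : M.IsHermitian)
    (u : EuclideanSpace ℝ (Fin n)) :
    |⟪u, Matrix.toEuclideanLin M u⟫| ≤ specRad M * ‖u‖ ^ 2 := by
  rcases eq_or_ne u 0 with rfl | hu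
  · simp [specRad_nonneg M]
  · have : Nontrivial (EuclideanSpace ℝ (Fin n)) := nontrivial_of_ne u 0 hu
    set T : EuclideanSpace ℝ (Fin n) →ₗ[ℝ] EuclideanSpace ℝ (Fin n) := Matrix.toEuclideanLin M with hTdef
    have hT : T.IsSymmetric := Matrix.isHermitian_iff_isSymmetric.1 hM
    set s : {x : EuclideanSpace ℝ (Fin n) // x ≠ 0} → ℝ := fun x => RCLike.re ⟪T x, (x : EuclideanSpace ℝ (Fin n))⟫ / ‖(x : EuclideanSpace ℝ (Fin n))‖ ^ 2 with hs
    -- boundedness of the Rayleigh quotient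
    obtain ⟨Tc, hTc⟩ : ∃ Tc : EuclideanSpace ℝ (Fin n) →L[ℝ] EuclideanSpace ℝ (Fin n), ∀ y, Tc y = T y :=
      ⟨LinearMap.toContinuousLinearMap T, fun y => rfl⟩
    have hbound : ∀ p : {x : EuclideanSpace ℝ (Fin n) // x ≠ 0}, |s p| ≤ ‖Tc‖ := by
      intro ⟨y, hy⟩
      have h1 : |⟪T y, y⟫| ≤ ‖Tc‖ * ‖y‖ ^ 2 := by
        calc |⟪T y, y⟫| ≤ ‖T y‖ * ‖y‖ := abs_real_inner_le_norm _ _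
          _ ≤ (‖Tc‖ * ‖y‖) * ‖y‖ := by
              have := Tc.le_opNorm y
              rw [hTc] at this
              exact mul_le_mul_of_nonneg_right this (norm_nonneg _)
          _ = ‖Tc‖ * ‖y‖ ^ 2 := by ring
      have hy2 : (0:ℝ) < ‖y‖ ^ 2 := pow_pos (norm_pos_iff.2 hy) 2
      rw [hs]
      simp only [abs_div, abs_pow, abs_norm]
      rw [div_le_iff₀ hy2]
      simpa using h1
    have hAbove : BddAbove (Set.range s) := by
      refine ⟨‖Tc‖, ?_⟩
      rintro r ⟨p, rfl⟩
      exact (le_abs_self _).trans (hbound p)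
    have hBelow : BddBelow (Set.range s) := by
      refine ⟨-‖Tc‖, ?_⟩
      rintro r ⟨p, rfl⟩
      exact neg_le_of_abs_le (hbound p)
    -- the sup and inf are eigenvalues
    have hsup := hT.hasEigenvalue_iSup_of_finiteDimensional
    have hinf := hT.hasEigenvalue_iInf_of_finiteDimensional
    set μmax : ℝ := ⨆ x : {x : EuclideanSpace ℝ (Fin n) // x ≠ 0}, RCLike.re ⟪T x, (x : EuclideanSpace ℝ (Fin n))⟫ / ‖(x : EuclideanSpace ℝ (Fin n))‖ ^ 2 with hμmax
    set μmin : ℝ := ⨅ x : {x : EuclideanSpace ℝ (Fin n) // x ≠ 0}, RCLike.re ⟪T x, (x : EuclideanSpace ℝ (Fin n))⟫ / ‖(x : EuclideanSpace ℝ (Fin n))‖ ^ 2 with hμmin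
    have hmemmax : μmax ∈ spectrum ℝ M := by
      have := hsup.mem_spectrum
      rwa [Matrix.spectrum_toEuclideanLin (𝕜 := ℝ)] at this
    have hmemmin : μmin ∈ spectrum ℝ M := by
      have := hinf.mem_spectrum
      rwa [Matrix.spectrum_toEuclideanLin (𝕜 := ℝ)] at this
    have hu2 : (0:ℝ) < ‖u‖ ^ 2 := pow_pos (norm_pos_iff.2 hu) 2
    have hle1 : s ⟨u, hu⟩ ≤ μmax := le_ciSup hAbove _
    have hle2 : μmin ≤ s ⟨u, hu⟩ := ciInf_le hBelow _
    have hsval : s ⟨u, hu⟩ = ⟪T u, u⟫ / ‖u‖ ^ 2 := rfl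
    have hcomm : ⟪u, T u⟫ = ⟪T u, u⟫ := real_inner_comm _ _
    rw [hcomm]
    rcases le_or_gt 0 (⟪T u, u⟫) with hpos | hneg
    · rw [abs_of_nonneg hpos]
      calc ⟪T u, u⟫ = s ⟨u, hu⟩ * ‖u‖ ^ 2 := by rw [hsval]; field_simp
        _ ≤ μmax * ‖u‖ ^ 2 := mul_le_mul_of_nonneg_right hle1 (le_of_lt hu2)
        _ ≤ |μmax| * ‖u‖ ^ 2 := mul_le_mul_of_nonneg_right (le_abs_self _) (le_of_lt hu2)
        _ ≤ specRad M * ‖u‖ ^ 2 :=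
            mul_le_mul_of_nonneg_right (abs_le_specRad hmemmax) (le_of_lt hu2)
    · rw [abs_of_neg hneg]
      calc -⟪T u, u⟫ = (-(s ⟨u, hu⟩)) * ‖u‖ ^ 2 := by rw [hsval]; field_simp
        _ ≤ (-μmin) * ‖u‖ ^ 2 :=
            mul_le_mul_of_nonneg_right (neg_le_neg hle2) (le_of_lt hu2)
        _ ≤ |μmin| * ‖u‖ ^ 2 := mul_le_mul_of_nonneg_right (neg_le_abs _) (le_of_lt hu2)
        _ ≤ specRad M * ‖u‖ ^ 2 :=
            mul_le_mul_of_nonneg_right (abs_le_specRad hmemmin) (le_of_lt hu2)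

lemma bilin_eq_inner {n : ℕ}
    (B : EuclideanSpace ℝ (Fin n) →L[ℝ] EuclideanSpace ℝ (Fin n) →L[ℝ] ℝ)
    (u : EuclideanSpace ℝ (Fin n)) :
    B u u = ⟪u, Matrix.toEuclideanLin
      (fun i j => B (EuclideanSpace.single i 1) (EuclideanSpace.single j 1)) u⟫ := by
  have hu : ∑ i, u i • EuclideanSpace.single i (1:ℝ) = u := by
    simpa [EuclideanSpace.basisFun_apply, EuclideanSpace.basisFun_repr] using
      (EuclideanSpace.basisFun (Fin n) ℝ).sum_repr u
  have expand : ∀ w : EuclideanSpace ℝ (Fin n),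
      B w u = ∑ j, u j * B w (EuclideanSpace.single j 1) := by
    intro w
    conv_lhs => rw [← hu]
    rw [map_sum]
    exact Finset.sum_congr rfl fun j _ => by
      rw [_root_.map_smul, smul_eq_mul]
  have expand2 : ∀ z : EuclideanSpace ℝ (Fin n),
      B u z = ∑ i, u i * B (EuclideanSpace.single i 1) z := by
    intro z
    conv_lhs => rw [← hu]
    rw [map_sum, ContinuousLinearMap.coe_sum', Finset.sum_apply]
    refine Finset.sum_congr rfl fun i _ => ?_
    rw [_root_.map_smul, ContinuousLinearMap.coe_smul', Pi.smul_apply, smul_eq_mul]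
  have lhs_eq : B u u = ∑ i, ∑ j, u i * u j *
      B (EuclideanSpace.single i 1) (EuclideanSpace.single j 1) := by
    calc B u u = ∑ j, u j * B u (EuclideanSpace.single j 1) := expand u
      _ = ∑ j, ∑ i, u j * (u i * B (EuclideanSpace.single i 1) (EuclideanSpace.single j 1)) := by
          refine Finset.sum_congr rfl fun j _ => ?_
          rw [expand2, Finset.mul_sum]
      _ = ∑ i, ∑ j, u i * u j *
          B (EuclideanSpace.single i 1) (EuclideanSpace.single j 1) := by
          rw [Finset.sum_comm]
          exact Finset.sum_congr rfl fun i _ => Finset.sum_congr rfl fun j _ => by ring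
  rw [lhs_eq]
  rw [PiLp.inner_apply]
  refine Finset.sum_congr rfl fun i _ => ?_
  have happ : (Matrix.toEuclideanLin
      (fun i j => B (EuclideanSpace.single i 1) (EuclideanSpace.single j 1)) u) i =
      ∑ j, B (EuclideanSpace.single i 1) (EuclideanSpace.single j 1) * u j := rfl
  rw [happ, RCLike.inner_apply, starRingEnd_apply, star_trivial, Finset.sum_mul]
  exact Finset.sum_congr rfl fun j _ => by ring

lemma taylor_one_bound (g g' g'' : ℝ → ℝ)
    (hg : ∀ t ∈ Icc (0:ℝ) 1, HasDerivAt g (g' t) t)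
    (hg' : ∀ t ∈ Icc (0:ℝ) 1, HasDerivAt g' (g'' t) t)
    {C : ℝ} (hC : ∀ t ∈ Icc (0:ℝ) 1, |g'' t| ≤ C) :
    |g 1 - g 0 - g' 0| ≤ C / 2 := by
  have h01 : (0:ℝ) ≤ 1 := zero_le_one
  have huI : uIcc (0:ℝ) 1 = Icc 0 1 := uIcc_of_le h01
  have hgc : ContinuousOn g' (Icc 0 1) := fun t ht => (hg' t ht).continuousAt.continuousWithinAt
  have hmvt : ∀ t ∈ Icc (0:ℝ) 1, |g' t - g' 0| ≤ C * t := by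
    intro t ht
    have := Convex.norm_image_sub_le_of_norm_hasDerivWithin_le
      (f := g') (f' := g'') (C := C) (s := Icc (0:ℝ) 1)
      (fun y hy => (hg' y hy).hasDerivWithinAt) (fun y hy => by simpa using hC y hy)
      (convex_Icc 0 1) (left_mem_Icc.2 h01) ht
    simpa [Real.norm_eq_abs, abs_of_nonneg ht.1] using this
  have hint : IntervalIntegrable g' MeasureTheory.volume 0 1 :=
    (hgc.mono (by rw [huI])).intervalIntegrable
  have hftc : ∫ t in (0:ℝ)..1, g' t = g 1 - g 0 :=
    intervalIntegral.integral_eq_sub_of_hasDerivAt (fun t ht => hg t (by rwa [huI] at ht)) hint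
  have h2 : g 1 - g 0 - g' 0 = ∫ t in (0:ℝ)..1, (g' t - g' 0) := by
    rw [intervalIntegral.integral_sub hint intervalIntegrable_const, hftc,
      intervalIntegral.integral_const]
    simp
  rw [h2]
  have hC0 : 0 ≤ C := le_trans (abs_nonneg _) (hC 0 (left_mem_Icc.2 h01))
  have hb : ‖∫ t in (0:ℝ)..1, (g' t - g' 0)‖ ≤ |∫ t in (0:ℝ)..1, C * t| := by
    refine intervalIntegral.norm_integral_le_abs_of_norm_le (μ := MeasureTheory.volume)
      (f := fun t => g' t - g' 0) (g := fun t => C * t) (a := 0) (b := 1) ?_ ?_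
    · refine MeasureTheory.ae_restrict_of_forall_mem measurableSet_Ioc ?_
      intro t ht
      have ht' : t ∈ Icc (0:ℝ) 1 := by
        constructor
        · exact le_of_lt (by simpa using ht.1)
        · simpa using ht.2
      simpa [Real.norm_eq_abs] using hmvt t ht'
    · exact (continuous_const.mul continuous_id :
        Continuous fun t : ℝ => C * t).intervalIntegrable 0 1
  have hval : ∫ t in (0:ℝ)..1, C * t = C / 2 := by
    rw [intervalIntegral.integral_const_mul, integral_id]
    ring
  rw [hval, abs_of_nonneg (by linarith : (0:ℝ) ≤ C / 2), Real.norm_eq_abs] at hb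
  exact hb

/-- interpolation error bound, used in Proposition 1 of the paper.
If `x ↦ A·x + a` is the affine interpolant of a `C²` function `φ` at the vertices of a
full-dimensional simplex `S` of diameter `δ`, then for every `x ∈ S`,
`|φ(x) − A·x − a| ≤ (1/2) (max_{y∈S} ρ(H(φ)(y))) δ²`. -/
theorem affine_interpolation_error
    (n : ℕ) (v : Fin (n + 1) → EuclideanSpace ℝ (Fin n))
    (hv : AffineIndependent ℝ v)
    (S : Set (EuclideanSpace ℝ (Fin n)))
    (hS : S = convexHull ℝ (Set.range v))
    (δ : ℝ) (hδ : IsGreatest {d : ℝ | ∃ x ∈ S, ∃ y ∈ S, d = ‖x - y‖} δ)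
    (V : Set (EuclideanSpace ℝ (Fin n))) (hVopen : IsOpen V) (hSV : S ⊆ V)
    (φ : EuclideanSpace ℝ (Fin n) → ℝ) (hφ : ContDiffOn ℝ 2 φ V)
    (A : EuclideanSpace ℝ (Fin n)) (a : ℝ)
    (hinterp : ∀ i, A ⬝ᵥ v i + a = φ (v i))
    (ρmax : ℝ)
    (hρ : IsGreatest ((fun y => specRad (hessMat φ y)) '' S) ρmax)
    (x : EuclideanSpace ℝ (Fin n)) (hx : x ∈ S) :
    |φ x - A ⬝ᵥ x - a| ≤ (1 / 2) * ρmax * δ ^ 2 := by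
  classical
  have hSconv : Convex ℝ S := hS ▸ convex_convexHull ℝ _
  have hvS : ∀ i, v i ∈ S := fun i => hS ▸ subset_convexHull ℝ _ (Set.mem_range_self i)
  have hρ0 : 0 ≤ ρmax := by
    obtain ⟨y, -, h⟩ := hρ.1
    rw [← h]; exact specRad_nonneg _
  -- convex combination representing x
  obtain ⟨w, hw0, hw1, hwx⟩ : ∃ w : Fin (n+1) → ℝ,
      (∀ i, 0 ≤ w i) ∧ ∑ i, w i = 1 ∧ ∑ i, w i • v i = x := by
    have hx' : x ∈ convexHull ℝ (Set.range v) := hS ▸ hx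
    rw [convexHull_range_eq_exists_affineCombination] at hx'
    obtain ⟨s, w, hw0, hw1, hwx⟩ := hx'
    refine ⟨fun i => if i ∈ s then w i else 0, fun i => ?_, ?_, ?_⟩
    · by_cases h : i ∈ s
      · simpa [h] using hw0 i h
      · simp [h]
    · rw [Finset.sum_ite_mem, Finset.univ_inter]; exact hw1
    · rw [← hwx, s.affineCombination_eq_linear_combination v w hw1]
      have hsplit : ∀ i, (if i ∈ s then w i else 0) • v i
          = if i ∈ s then w i • v i else 0 := fun i => by split <;> simp
      rw [Finset.sum_congr rfl fun i _ => hsplit i, Finset.sum_ite_mem, Finset.univ_inter]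
  -- differentiability facts
  have hφdiff : ∀ y ∈ V, DifferentiableAt ℝ φ y := fun y hy =>
    (hφ.differentiableOn (by norm_num)).differentiableAt (hVopen.mem_nhds hy)
  have hF1 : ContDiffOn ℝ 1 (fderiv ℝ φ) V := hφ.fderiv_of_isOpen hVopen (by norm_num)
  have hFdiff : ∀ y ∈ V, DifferentiableAt ℝ (fderiv ℝ φ) y := fun y hy =>
    (hF1.differentiableOn one_ne_zero).differentiableAt (hVopen.mem_nhds hy)
  -- key per-vertex Taylor estimate
  have key : ∀ i, |φ (v i) - φ x - fderiv ℝ φ x (v i - x)| ≤ ρmax * δ ^ 2 / 2 := by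
    intro i
    set u : EuclideanSpace ℝ (Fin n) := v i - x with hu
    set L : ℝ → EuclideanSpace ℝ (Fin n) := fun t => x + t • u with hLdef
    have hLS : ∀ t ∈ Icc (0:ℝ) 1, L t ∈ S := by
      intro t ht
      have hmem := hSconv hx (hvS i) (sub_nonneg.2 ht.2) ht.1 (by ring)
      have : L t = (1 - t) • x + t • v i := by
        simp only [hLdef, hu]
        module
      rw [this]; exact hmem
    have hLd : ∀ t : ℝ, HasDerivAt L u t := by
      intro t
      simpa [hLdef] using ((hasDerivAt_id t).smul_const u).const_add x
    have hgd : ∀ t ∈ Icc (0:ℝ) 1, HasDerivAt (fun s => φ (L s)) (fderiv ℝ φ (L t) u) t :=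
      fun t ht => ((hφdiff _ (hSV (hLS t ht))).hasFDerivAt).comp_hasDerivAt t (hLd t)
    have hgd' : ∀ t ∈ Icc (0:ℝ) 1,
        HasDerivAt (fun s => fderiv ℝ φ (L s) u) (fderiv ℝ (fderiv ℝ φ) (L t) u u) t := by
      intro t ht
      have h1 : HasDerivAt (fun s => fderiv ℝ φ (L s)) (fderiv ℝ (fderiv ℝ φ) (L t) u) t :=
        ((hFdiff _ (hSV (hLS t ht))).hasFDerivAt).comp_hasDerivAt t (hLd t)
      simpa using h1.clm_apply (hasDerivAt_const t u)
    have hbound : ∀ t ∈ Icc (0:ℝ) 1, |fderiv ℝ (fderiv ℝ φ) (L t) u u| ≤ ρmax * δ ^ 2 := by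
      intro t ht
      have hyS := hLS t ht
      have hyV := hSV hyS
      have hsym : IsSymmSndFDerivAt ℝ φ (L t) :=
        ((hφ (L t) hyV).contDiffAt (hVopen.mem_nhds hyV)).isSymmSndFDerivAt (by simp)
      have hherm : (hessMat φ (L t)).IsHermitian := by
        refine Matrix.IsHermitian.ext fun p q => ?_
        simp only [hessMat, iteratedFDeriv_two_apply, RCLike.star_def]
        simp only [Matrix.cons_val_zero, Matrix.cons_val_one, Matrix.head_cons]
        rw [starRingEnd_apply, star_trivial]
        exact hsym _ _
      have hmatentry : (fun p q => fderiv ℝ (fderiv ℝ φ) (L t)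
          (EuclideanSpace.single p 1) (EuclideanSpace.single q 1)) = hessMat φ (L t) := by
        funext p q
        simp only [hessMat, iteratedFDeriv_two_apply]
        simp only [Matrix.cons_val_zero, Matrix.cons_val_one, Matrix.head_cons]
      have heq : fderiv ℝ (fderiv ℝ φ) (L t) u u =
          ⟪u, Matrix.toEuclideanLin (hessMat φ (L t)) u⟫ := by
        rw [← hmatentry]
        exact bilin_eq_inner (fderiv ℝ (fderiv ℝ φ) (L t)) u
      rw [heq]
      have h1 : specRad (hessMat φ (L t)) ≤ ρmax := hρ.2 ⟨L t, hyS, rfl⟩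
      have h2 : ‖u‖ ≤ δ := hδ.2 ⟨v i, hvS i, x, hx, rfl⟩
      have h3 : ‖u‖ ^ 2 ≤ δ ^ 2 := by
        have := pow_le_pow_left₀ (norm_nonneg u) h2 2
        simpa using this
      calc |⟪u, Matrix.toEuclideanLin (hessMat φ (L t)) u⟫|
          ≤ specRad (hessMat φ (L t)) * ‖u‖ ^ 2 := abs_inner_le_specRad _ hherm u
        _ ≤ ρmax * δ ^ 2 := by
            have h4 : (0:ℝ) ≤ ‖u‖ ^ 2 := by positivity
            nlinarith [specRad_nonneg (hessMat φ (L t))]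
    have htay := taylor_one_bound (fun s => φ (L s)) (fun t => fderiv ℝ φ (L t) u)
      (fun t => fderiv ℝ (fderiv ℝ φ) (L t) u u) hgd hgd' hbound
    have hL1 : L 1 = v i := by simp [hLdef, hu]
    have hL0 : L 0 = x := by simp [hLdef]
    simpa only [hL1, hL0] using htay
  -- dot product as a linear map
  have hdotlin : ∀ y z : EuclideanSpace ℝ (Fin n), A ⬝ᵥ (y + z) = A ⬝ᵥ y + A ⬝ᵥ z :=
    fun y z => dotProduct_add A y z
  have hdotsmul : ∀ (c : ℝ) (y : EuclideanSpace ℝ (Fin n)), A ⬝ᵥ (c • y) = c * (A ⬝ᵥ y) :=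
    fun c y => dotProduct_smul c A y  -- check name/direction
  have hAx : A ⬝ᵥ x = ∑ i, w i * (A ⬝ᵥ v i) := by
    let ℓ : EuclideanSpace ℝ (Fin n) →ₗ[ℝ] ℝ :=
      { toFun := fun y => A ⬝ᵥ y
        map_add' := hdotlin
        map_smul' := hdotsmul }
    have : A ⬝ᵥ x = ℓ x := rfl
    rw [this, ← hwx, map_sum]
    exact Finset.sum_congr rfl fun i _ => by
      show ℓ (w i • v i) = w i * (A ⬝ᵥ v i)
      rw [LinearMap.map_smul, smul_eq_mul]
      rfl
  -- the derivative term sums to zero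
  have hFx0 : ∑ i, w i * (fderiv ℝ φ x (v i - x)) = 0 := by
    have h1 : ∑ i, w i * (fderiv ℝ φ x (v i - x)) = fderiv ℝ φ x (∑ i, w i • (v i - x)) := by
      rw [map_sum]
      exact Finset.sum_congr rfl fun i _ => by rw [_root_.map_smul, smul_eq_mul]
    rw [h1]
    have h2 : ∑ i, w i • (v i - x) = 0 := by
      have : ∑ i, w i • (v i - x) = (∑ i, w i • v i) - (∑ i, w i) • x := by
        rw [Finset.sum_smul]
        rw [← Finset.sum_sub_distrib]
        exact Finset.sum_congr rfl fun i _ => smul_sub (w i) (v i) x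
      rw [this, hwx, hw1, one_smul, sub_self]
    rw [h2, map_zero]
  -- assembling
  have hsum : ∑ i, w i * φ (v i) = A ⬝ᵥ x + a := by
    have : ∀ i, w i * φ (v i) = w i * (A ⬝ᵥ v i) + w i * a := fun i => by
      rw [← hinterp i]; ring
    rw [Finset.sum_congr rfl fun i _ => this i, Finset.sum_add_distrib, ← Finset.sum_mul,
      hw1, one_mul, ← hAx]
  have hmain : φ x - A ⬝ᵥ x - a = -∑ i, w i * (φ (v i) - φ x - fderiv ℝ φ x (v i - x)) := by
    have hexp : ∑ i, w i * (φ (v i) - φ x - fderiv ℝ φ x (v i - x))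
        = (∑ i, w i * φ (v i)) - (∑ i, w i) * φ x
          - ∑ i, w i * (fderiv ℝ φ x (v i - x)) := by
      rw [Finset.sum_mul, ← Finset.sum_sub_distrib, ← Finset.sum_sub_distrib]
      exact Finset.sum_congr rfl fun i _ => by ring
    rw [hexp, hsum, hw1, hFx0]
    ring
  rw [hmain, abs_neg]
  calc |∑ i, w i * (φ (v i) - φ x - fderiv ℝ φ x (v i - x))|
      ≤ ∑ i, w i * (ρmax * δ ^ 2 / 2) := by
        refine (Finset.abs_sum_le_sum_abs _ _).trans (Finset.sum_le_sum fun i _ => ?_)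
        rw [abs_mul, abs_of_nonneg (hw0 i)]
        exact mul_le_mul_of_nonneg_left (key i) (hw0 i)
    _ = ρmax * δ ^ 2 / 2 := by rw [← Finset.sum_mul, hw1, one_mul]
    _ = 1 / 2 * ρmax * δ ^ 2 := by ring
end

section
/- Let S ⊆ ℝⁿ be a full-dimensional simplex with vertices v_0, …, v_n, facets F_0, …, F_n and outward unit normals m_0, …, m_n. Let A ∈ ℝ^{n×n}, a ∈ ℝⁿ, and let W ⊆ ℝⁿ be a nonempty convex compact set. If a trajectory x of the disturbed affine system ẋ(t) = A x(t) + a + w(t) (with w continuous and w(t) ∈ W for all t) satisfies x(0) ∈ S and exits S at time T ≥ 0, then there exists j ∈ {0,…,n} such that x(T) ∈ F_j and F_j is not blocked. -/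
open Matrix Set

/-- Reinterpret a plain vector as an element of Euclidean space. -/
def toEuc {n : ℕ} (x : Fin n → ℝ) : EuclideanSpace ℝ (Fin n) := WithLp.toLp 2 x

/-- `x` is a trajectory of the disturbed system `ẋ(t) = F(x(t)) + w(t)`, `w(t) ∈ W`,
on `[0, ∞)`, for some continuous disturbance `w`. -/
def IsTrajectory {n : ℕ} (F : EuclideanSpace ℝ (Fin n) → EuclideanSpace ℝ (Fin n))
    (W : Set (EuclideanSpace ℝ (Fin n))) (x : ℝ → EuclideanSpace ℝ (Fin n)) : Prop :=
  ∃ w : ℝ → EuclideanSpace ℝ (Fin n),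
    ContinuousOn w (Set.Ici 0) ∧ (∀ t ∈ Set.Ici (0 : ℝ), w t ∈ W) ∧
      ∀ t ∈ Set.Ici (0 : ℝ), HasDerivWithinAt x (F (x t) + w t) (Set.Ici 0) t

/-- The trajectory `x` exits the set `S` at time `T ≥ 0`. -/
def ExitsAt {n : ℕ} (S : Set (EuclideanSpace ℝ (Fin n)))
    (x : ℝ → EuclideanSpace ℝ (Fin n)) (T : ℝ) : Prop :=
  0 ≤ T ∧ ∃ ε > (0 : ℝ),
    (∀ t ∈ Set.Icc 0 T, x t ∈ S) ∧ ∀ t ∈ Set.Ioo T (T + ε), x t ∉ S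

private lemma euc_sum_apply {n : ℕ} {ι : Type*} (s : Finset ι)
    (f : ι → EuclideanSpace ℝ (Fin n)) (k : Fin n) :
    (∑ i ∈ s, f i) k = ∑ i ∈ s, f i k := by
  induction s using Finset.cons_induction with
  | empty => rfl
  | cons a s ha ih => rw [Finset.sum_cons, Finset.sum_cons, ← ih]; rfl

/-- Proposition 3 of the paper.
If a trajectory of the disturbed affine system `ẋ = A x + a + w`, `w(t) ∈ W`,
starting in the simplex `S` exits `S` at time `T ≥ 0`, then `x(T)` belongs to a
facet of `S` that is not blocked. -/
theorem exit_point_on_unblocked_facet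
    (n : ℕ) (v : Fin (n + 1) → EuclideanSpace ℝ (Fin n))
    (hv : AffineIndependent ℝ v)
    (S : Set (EuclideanSpace ℝ (Fin n)))
    (hS : S = convexHull ℝ (Set.range v))
    (A : Matrix (Fin n) (Fin n) ℝ) (a : EuclideanSpace ℝ (Fin n))
    (W : Set (EuclideanSpace ℝ (Fin n)))
    (hWne : W.Nonempty) (hWconv : Convex ℝ W) (hWcomp : IsCompact W)
    (m : Fin (n + 1) → EuclideanSpace ℝ (Fin n)) (c : Fin (n + 1) → ℝ)
    (hm_unit : ∀ j, ‖m j‖ = 1)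
    (hm_facet : ∀ j i, i ≠ j → m j ⬝ᵥ v i = c j)
    (hm_out : ∀ j, m j ⬝ᵥ v j < c j)
    (x : ℝ → EuclideanSpace ℝ (Fin n))
    (hx : IsTrajectory (fun y => toEuc (A *ᵥ y) + a) W x)
    (hx0 : x 0 ∈ S)
    (T : ℝ) (hT : ExitsAt S x T) :
    ∃ j : Fin (n + 1),
      x T ∈ convexHull ℝ (v '' {i | i ≠ j}) ∧
      ¬ (∀ y ∈ convexHull ℝ (v '' {i | i ≠ j}),
          m j ⬝ᵥ (toEuc (A *ᵥ y) + a) ≤ - sSup ((fun w : EuclideanSpace ℝ (Fin n) => m j ⬝ᵥ w) '' W)) := by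
  classical
  obtain ⟨w, hw_cont, hw_mem, hx_deriv⟩ := hx
  obtain ⟨hT0, ε, hεpos, hin, hout⟩ := hT
  by_contra hcon
  push_neg at hcon
  -- Affine basis given by the vertices
  have hspan : affineSpan ℝ (Set.range v) = ⊤ := by
    rw [hv.affineSpan_eq_top_iff_card_eq_finrank_add_one]
    simp [finrank_euclideanSpace_fin]
  let b : AffineBasis (Fin (n + 1)) ℝ (EuclideanSpace ℝ (Fin n)) := ⟨v, hv, hspan⟩
  set lam : Fin (n + 1) → EuclideanSpace ℝ (Fin n) → ℝ := fun i y => b.coord i y with hlam_def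
  have hsum1 : ∀ y, ∑ i, lam i y = 1 := fun y => b.sum_coord_apply_eq_one y
  have hrepr : ∀ y : EuclideanSpace ℝ (Fin n), ∑ i, lam i y • v i = y := fun y =>
    b.linear_combination_coord_eq_self y
  -- dot product through barycentric coordinates
  have hdot : ∀ (u : EuclideanSpace ℝ (Fin n)) (y : EuclideanSpace ℝ (Fin n)),
      u ⬝ᵥ y = ∑ i, lam i y * (u ⬝ᵥ v i) := by
    intro u y
    have happ : ∀ k, y k = ∑ i, lam i y * v i k := by
      intro k
      conv_lhs => rw [← hrepr y]
      rw [euc_sum_apply]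
      exact Finset.sum_congr rfl fun i _ => rfl
    calc u ⬝ᵥ y = ∑ k, u k * y k := rfl
      _ = ∑ k, ∑ i, lam i y * (u k * v i k) := by
          refine Finset.sum_congr rfl fun k _ => ?_
          rw [happ k, Finset.mul_sum]
          exact Finset.sum_congr rfl fun i _ => by ring
      _ = ∑ i, ∑ k, lam i y * (u k * v i k) := Finset.sum_comm
      _ = ∑ i, lam i y * (u ⬝ᵥ v i) := by
          refine Finset.sum_congr rfl fun i _ => ?_
          show ∑ k, lam i y * (u k * v i k) = lam i y * ∑ k, u k * v i k
          rw [Finset.mul_sum]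
  set d : Fin (n + 1) → ℝ := fun i => c i - m i ⬝ᵥ v i with hd_def
  have hdpos : ∀ i, 0 < d i := fun i => sub_pos.2 (hm_out i)
  -- key identity : m j ⬝ᵥ y - c j = - lam j y * d j
  have key1 : ∀ j (y : EuclideanSpace ℝ (Fin n)),
      m j ⬝ᵥ y - c j = -(lam j y) * d j := by
    intro j y
    have h2 : ∑ i, lam i y * (m j ⬝ᵥ v i)
        = (∑ i, lam i y * c j) + lam j y * (m j ⬝ᵥ v j - c j) := by
      have hterm : ∀ i ∈ Finset.univ, lam i y * (m j ⬝ᵥ v i)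
          = lam i y * c j + (if i = j then lam j y * (m j ⬝ᵥ v j - c j) else 0) := by
        intro i _
        by_cases hij : i = j
        · subst hij; simp; ring
        · rw [hm_facet j i hij, if_neg hij, add_zero]
      rw [Finset.sum_congr rfl hterm, Finset.sum_add_distrib,
        Finset.sum_ite_eq' Finset.univ j (fun _ => lam j y * (m j ⬝ᵥ v j - c j))]
      simp
    rw [hdot (m j) y, h2, ← Finset.sum_mul, hsum1, one_mul, hd_def]
    ring
  -- affine expansion of the vector field
  have keyphi : ∀ j (y : EuclideanSpace ℝ (Fin n)),
      m j ⬝ᵥ (toEuc (A *ᵥ y) + a) = ∑ i, lam i y * (m j ⬝ᵥ (toEuc (A *ᵥ v i) + a)) := by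
    intro j y
    have e1 : ∀ z : EuclideanSpace ℝ (Fin n),
        m j ⬝ᵥ (toEuc (A *ᵥ z) + a) = (m j ᵥ* A) ⬝ᵥ z + m j ⬝ᵥ a := by
      intro z
      have : m j ⬝ᵥ (toEuc (A *ᵥ z) + a) = m j ⬝ᵥ toEuc (A *ᵥ z) + m j ⬝ᵥ a :=
        dotProduct_add _ _ _
      rw [this, show m j ⬝ᵥ toEuc (A *ᵥ z) = m j ⬝ᵥ (A *ᵥ z) from rfl, dotProduct_mulVec]
    rw [e1]
    calc (m j ᵥ* A) ⬝ᵥ y + m j ⬝ᵥ a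
        = (∑ i, lam i y * ((m j ᵥ* A) ⬝ᵥ v i)) + (∑ i, lam i y) * (m j ⬝ᵥ a) := by
          rw [show (m j ᵥ* A) ⬝ᵥ y = ∑ i, lam i y * ((m j ᵥ* A) ⬝ᵥ v i) from
            hdot (WithLp.toLp 2 (m j ᵥ* A)) y, hsum1, one_mul]
      _ = ∑ i, (lam i y * ((m j ᵥ* A) ⬝ᵥ v i) + lam i y * (m j ⬝ᵥ a)) := by
          rw [Finset.sum_add_distrib, Finset.sum_mul]
      _ = ∑ i, lam i y * (m j ⬝ᵥ (toEuc (A *ᵥ v i) + a)) := by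
          refine Finset.sum_congr rfl fun i _ => ?_
          rw [e1 (v i)]; ring
  -- membership characterizations
  have memS_of : ∀ y : EuclideanSpace ℝ (Fin n), (∀ i, 0 ≤ lam i y) → y ∈ S := by
    intro y hy
    rw [hS]
    have h := affineCombination_mem_convexHull (s := Finset.univ) (v := v)
      (w := fun i => lam i y) (fun i _ => hy i) (hsum1 y)
    rwa [Finset.univ.affineCombination_eq_linear_combination _ _ (hsum1 y), hrepr y] at h
  have memS_to : ∀ y ∈ S, ∀ j, m j ⬝ᵥ y ≤ c j := by
    intro y hy j
    rw [hS] at hy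
    have hlin : IsLinearMap ℝ (fun z : EuclideanSpace ℝ (Fin n) => m j ⬝ᵥ z) :=
      ⟨fun p q => dotProduct_add _ _ _, fun r p => dotProduct_smul r _ _⟩
    have hcv : Convex ℝ {z : EuclideanSpace ℝ (Fin n) | m j ⬝ᵥ z ≤ c j} :=
      convex_halfSpace_le hlin (c j)
    refine convexHull_min ?_ hcv hy
    rintro _ ⟨i, rfl⟩
    by_cases hij : i = j
    · subst hij; exact (hm_out i).le
    · exact (hm_facet j i hij).le
  have hiff : ∀ j (y : EuclideanSpace ℝ (Fin n)), m j ⬝ᵥ y ≤ c j ↔ 0 ≤ lam j y := by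
    intro j y
    have h := key1 j y
    have hd := hdpos j
    constructor
    · intro hle; nlinarith
    · intro hle; nlinarith
  have memFacet : ∀ j (y : EuclideanSpace ℝ (Fin n)), (∀ i, 0 ≤ lam i y) → lam j y = 0 →
      y ∈ convexHull ℝ (v '' {i | i ≠ j}) := by
    intro j y hy hj
    have hw1 : ∑ i ∈ Finset.univ.erase j, lam i y = 1 := by
      rw [Finset.sum_erase _ (by rw [hj])]
      exact hsum1 y
    have hmem := (Finset.univ.erase j).centerMass_mem_convexHull
      (w := fun i => lam i y) (z := v) (fun i _ => hy i) (by rw [hw1]; norm_num)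
      (fun i hi => Set.mem_image_of_mem v (Finset.ne_of_mem_erase hi))
    have hsum_e : ∑ i ∈ Finset.univ.erase j, lam i y • v i = y := by
      rw [Finset.sum_erase _ (by rw [hj, zero_smul])]
      exact hrepr y
    rwa [Finset.centerMass_eq_of_sum_1 _ _ hw1, hsum_e] at hmem
  -- basic facts about x T
  have hxTS : x T ∈ S := hin T ⟨hT0, le_rfl⟩
  have hlamT : ∀ i, 0 ≤ lam i (x T) := fun i => (hiff i _).1 (memS_to _ hxTS i)
  set J : Finset (Fin (n + 1)) := Finset.univ.filter (fun j => m j ⬝ᵥ x T = c j) with hJ_def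
  have hJ0 : ∀ j ∈ J, lam j (x T) = 0 := by
    intro j hj
    have hj' : m j ⬝ᵥ x T = c j := (Finset.mem_filter.1 hj).2
    have h := key1 j (x T)
    have hd := hdpos j
    nlinarith [hlamT j]
  set M : Fin (n + 1) → ℝ := fun j => sSup ((fun u : EuclideanSpace ℝ (Fin n) => m j ⬝ᵥ u) '' W) with hM_def
  -- continuity of dot products
  have hdc : ∀ u : EuclideanSpace ℝ (Fin n),
      Continuous fun z : EuclideanSpace ℝ (Fin n) => u ⬝ᵥ z := by
    intro u
    have : (fun z : EuclideanSpace ℝ (Fin n) => u ⬝ᵥ z) = fun z => ∑ k, u k * z k := rfl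
    rw [this]
    refine continuous_finset_sum _ fun k _ => Continuous.mul continuous_const ?_
    exact (continuous_apply k).comp (PiLp.continuous_ofLp 2 _)
  have hMle : ∀ j, ∀ u ∈ W, m j ⬝ᵥ u ≤ M j := by
    intro j u hu
    exact le_csSup ((hWcomp.image (hdc (m j))).bddAbove) (Set.mem_image_of_mem _ hu)
  -- blocked facets at x T
  have hxTF : ∀ j ∈ J, x T ∈ convexHull ℝ (v '' {i | i ≠ j}) := fun j hj =>
    memFacet j _ hlamT (hJ0 j hj)
  have hblock : ∀ j ∈ J, ∀ i, i ≠ j →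
      m j ⬝ᵥ (toEuc (A *ᵥ v i) + a) + M j ≤ 0 := by
    intro j hj i hij
    have h := hcon j (hxTF j hj) (v i)
      (subset_convexHull ℝ _ (Set.mem_image_of_mem v hij))
    have hMeq : M j = sSup ((fun w : EuclideanSpace ℝ (Fin n) => m j ⬝ᵥ w) '' W) := rfl
    linarith
  -- derivative of facet functions along the trajectory
  set D : Fin (n + 1) → ℝ → ℝ := fun j t => m j ⬝ᵥ (toEuc (A *ᵥ x t) + a + w t) with hD_def
  set hfun : Fin (n + 1) → ℝ → ℝ := fun j t => m j ⬝ᵥ x t - c j with hfun_def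
  have hdot_inner : ∀ (u y : EuclideanSpace ℝ (Fin n)), u ⬝ᵥ y = (innerSL ℝ u) y := by
    intro u y
    simp [PiLp.inner_apply, RCLike.inner_apply, dotProduct, starRingEnd_apply, mul_comm]
  have hhd : ∀ j, ∀ t, (0 : ℝ) ≤ t →
      HasDerivWithinAt (hfun j) (D j t) (Set.Ici 0) t := by
    intro j t ht
    have hx' := hx_deriv t ht
    have hc := ((innerSL ℝ (m j)).hasFDerivAt (x := x t)).comp_hasDerivWithinAt t hx'
    have h1 : HasDerivWithinAt (fun s => m j ⬝ᵥ x s)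
        (m j ⬝ᵥ (toEuc (A *ᵥ x t) + a + w t)) (Set.Ici 0) t := by
      have heq : (fun s => m j ⬝ᵥ x s) = (⇑(innerSL ℝ (m j)) ∘ x) :=
        funext fun s => hdot_inner (m j) (x s)
      rw [heq]
      refine hc.congr_deriv ?_
      rw [← hdot_inner]
      rfl
    exact h1.sub_const (c j)
  have hxc : ContinuousOn x (Set.Ici 0) := fun t ht => (hx_deriv t ht).continuousWithinAt
  -- choice of δ : inactive facets stay strictly satisfied
  obtain ⟨δ, hδpos, hδ⟩ : ∃ δ > 0, ∀ t ∈ Set.Icc T (T + δ), ∀ i, i ∉ J → m i ⬝ᵥ x t < c i := by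
    have hev : ∀ᶠ t in nhdsWithin T (Set.Ici T), ∀ i, i ∉ J → m i ⬝ᵥ x t < c i := by
      refine Filter.eventually_all.2 fun i => ?_
      by_cases hi : i ∈ J
      · exact Filter.Eventually.of_forall fun t h => absurd hi h
      · have hlt : m i ⬝ᵥ x T < c i := by
          refine lt_of_le_of_ne (memS_to _ hxTS i) fun hEq => hi ?_
          rw [hJ_def]; exact Finset.mem_filter.2 ⟨Finset.mem_univ i, hEq⟩
        have hct : ContinuousWithinAt (fun t => m i ⬝ᵥ x t) (Set.Ici T) T := by
          have := ((hdc (m i)).comp_continuousOn hxc).mono (Set.Ici_subset_Ici.2 hT0)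
          exact this.continuousWithinAt Set.self_mem_Ici
        exact (hct.eventually_lt_const hlt).mono fun t h _ => h
    obtain ⟨u, hu, hsub⟩ := (nhdsGE_basis_Ico T).eventually_iff.mp hev
    refine ⟨(u - T) / 2, by linarith, fun t ht i hi => hsub ⟨ht.1, ?_⟩ i hi⟩
    have h2 := ht.2
    linarith
    -- constants
  set bet : Fin (n + 1) → Fin (n + 1) → ℝ :=
    fun j i => m j ⬝ᵥ (toEuc (A *ᵥ v i) + a) + M j with hbet_def
  set Kj : Fin (n + 1) → ℝ := fun j => ∑ i ∈ J, |bet j i| / d i with hKj_def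
  have hKjnn : ∀ j, 0 ≤ Kj j := fun j =>
    Finset.sum_nonneg fun i _ => div_nonneg (abs_nonneg _) (hdpos i).le
  set K : ℝ := ∑ j ∈ J, Kj j with hK_def
  set Tb : ℝ := T + δ with hTb_def
  set f : ℝ → ℝ := fun t => ∑ j ∈ J, max (hfun j t) 0 with hf_def
  set f' : ℝ → ℝ := fun t => ∑ j ∈ J,
    (if 0 < hfun j t then D j t else if hfun j t = 0 then max (D j t) 0 else 0) with hf'_def
  have hsubIcc : Set.Icc T Tb ⊆ Set.Ici (0 : ℝ) := fun t ht => le_trans hT0 ht.1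
  have hf_nonneg : ∀ t, 0 ≤ f t := fun t => Finset.sum_nonneg fun j _ => le_max_right _ 0
  have hterm_le : ∀ t, ∀ j ∈ J, max (hfun j t) 0 ≤ f t := fun t j hj =>
    Finset.single_le_sum (fun i _ => le_max_right (hfun i t) 0) hj
  -- continuity of f
  have hfc : ContinuousOn f (Set.Icc T Tb) := by
    refine continuousOn_finset_sum J fun j _ => ContinuousOn.sup ?_ continuousOn_const
    exact ((hdc (m j)).comp_continuousOn (hxc.mono hsubIcc)).sub continuousOn_const
  -- the right difference quotient of f converges to f'
  have slope_tendsto : ∀ t ∈ Set.Ico T Tb,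
      Filter.Tendsto (fun z => (z - t)⁻¹ * (f z - f t)) (nhdsWithin t (Set.Ioi t))
        (nhds (f' t)) := by
    intro t ht
    have ht0 : (0 : ℝ) ≤ t := le_trans hT0 ht.1
    have hmono : Set.Ioi t ⊆ Set.Ici (0 : ℝ) := fun z hz => le_trans ht0 (le_of_lt hz)
    have hquot : ∀ j, Filter.Tendsto (fun z => (z - t)⁻¹ * (hfun j z - hfun j t))
        (nhdsWithin t (Set.Ioi t)) (nhds (D j t)) := by
      intro j
      have hdj := (hhd j t ht0).mono hmono
      rw [hasDerivWithinAt_iff_tendsto_slope' (s := Set.Ioi t) (lt_irrefl t)] at hdj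
      refine hdj.congr fun z => ?_
      rw [slope_def_field, div_eq_inv_mul]
    have hcontj : ∀ j, Filter.Tendsto (fun z => hfun j z)
        (nhdsWithin t (Set.Ioi t)) (nhds (hfun j t)) := fun j =>
      ((hhd j t ht0).continuousWithinAt).mono hmono
    have heq : ∀ z, (z - t)⁻¹ * (f z - f t)
        = ∑ j ∈ J, (z - t)⁻¹ * (max (hfun j z) 0 - max (hfun j t) 0) := by
      intro z
      show (z - t)⁻¹ * ((∑ j ∈ J, max (hfun j z) 0) - ∑ j ∈ J, max (hfun j t) 0) = _
      rw [← Finset.sum_sub_distrib, Finset.mul_sum]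
    refine Filter.Tendsto.congr (fun z => (heq z).symm) ?_
    have hf't : f' t = ∑ j ∈ J,
        (if 0 < hfun j t then D j t else if hfun j t = 0 then max (D j t) 0 else 0) := rfl
    rw [hf't]
    refine tendsto_finset_sum _ fun j hj => ?_
    rcases lt_trichotomy (hfun j t) 0 with hneg | hzero | hpos
    · rw [if_neg (by linarith), if_neg (by linarith)]
      have hev : ∀ᶠ z in nhdsWithin t (Set.Ioi t), hfun j z < 0 :=
        (hcontj j).eventually_lt_const hneg
      refine Filter.Tendsto.congr' ?_ tendsto_const_nhds
      filter_upwards [hev] with z hz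
      rw [max_eq_right hz.le, max_eq_right hneg.le, sub_self, mul_zero]
    · rw [if_neg (by simp [hzero]), if_pos hzero]
      refine Filter.Tendsto.congr' ?_ ((hquot j).max tendsto_const_nhds)
      filter_upwards [self_mem_nhdsWithin] with z hz
      have hzt : (0 : ℝ) ≤ (z - t)⁻¹ := inv_nonneg.2 (sub_nonneg.2 (le_of_lt hz))
      rw [hzero, sub_zero, max_self, sub_zero, mul_max_of_nonneg _ _ hzt, mul_zero]
    · rw [if_pos hpos]
      have hev : ∀ᶠ z in nhdsWithin t (Set.Ioi t), 0 < hfun j z :=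
        (hcontj j).eventually_const_lt hpos
      refine Filter.Tendsto.congr' ?_ (hquot j)
      filter_upwards [hev] with z hz
      rw [max_eq_left hz.le, max_eq_left hpos.le]
  -- the differential inequality
  have hbound : ∀ t ∈ Set.Ico T Tb, f' t ≤ K * f t + 0 := by
    intro t ht
    have htIcc : t ∈ Set.Icc T (T + δ) := ⟨ht.1, ht.2.le⟩
    have ht0 : (0 : ℝ) ≤ t := le_trans hT0 ht.1
    have hlam_t : ∀ i, i ∉ J → 0 ≤ lam i (x t) := fun i hi =>
      (hiff i _).1 (hδ t htIcc i hi).le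
    have hcore : ∀ j ∈ J, 0 ≤ hfun j t → D j t ≤ Kj j * f t := by
      intro j hj hjt
      have e0 : D j t = m j ⬝ᵥ (toEuc (A *ᵥ x t) + a) + m j ⬝ᵥ w t := dotProduct_add _ _ _
      have e1 : m j ⬝ᵥ (toEuc (A *ᵥ x t) + a) + M j = ∑ i, lam i (x t) * bet j i := by
        rw [keyphi j (x t)]
        have hMj : M j = ∑ i, lam i (x t) * M j := by rw [← Finset.sum_mul, hsum1, one_mul]
        rw [hMj, ← Finset.sum_add_distrib]
        refine Finset.sum_congr rfl fun i _ => ?_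
        show _ = lam i (x t) * (m j ⬝ᵥ (toEuc (A *ᵥ v i) + a) + M j)
        ring
      have hwle : m j ⬝ᵥ w t ≤ M j := hMle j (w t) (hw_mem t ht0)
      have step1 : D j t ≤ ∑ i, lam i (x t) * bet j i := by
        rw [e0, ← e1]; linarith
      have hsplit : (∑ i, lam i (x t) * bet j i)
          = (∑ i ∈ Finset.univ \ J, lam i (x t) * bet j i)
            + ∑ i ∈ J, lam i (x t) * bet j i :=
        (Finset.sum_sdiff (Finset.subset_univ J)).symm
      have hout_le : (∑ i ∈ Finset.univ \ J, lam i (x t) * bet j i) ≤ 0 := by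
        refine Finset.sum_nonpos fun i hi => ?_
        have hiJ : i ∉ J := (Finset.mem_sdiff.1 hi).2
        have hine : i ≠ j := fun hEq => hiJ (hEq ▸ hj)
        have hbetle : bet j i ≤ 0 := hblock j hj i hine
        nlinarith [hlam_t i hiJ]
      have hin_le : ∀ i ∈ J, lam i (x t) * bet j i ≤ |bet j i| / d i * f t := by
        intro i hi
        have hdi := hdpos i
        have hlam_eq : lam i (x t) = -(hfun i t) / d i := by
          have h2 : hfun i t = -(lam i (x t)) * d i := key1 i (x t)
          rw [h2]
          field_simp
        have hmaxle : hfun i t ≤ max (hfun i t) 0 := le_max_left _ _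
        have hft : max (hfun i t) 0 ≤ f t := hterm_le t i hi
        have h0f : 0 ≤ f t := hf_nonneg t
        have hnum : -(hfun i t) * bet j i ≤ |bet j i| * f t := by
          by_cases hij : i = j
          · subst hij
            nlinarith [le_abs_self (bet i i), neg_abs_le (bet i i), abs_nonneg (bet i i)]
          · have hbetle : bet j i ≤ 0 := hblock j hj i hij
            have habs : |bet j i| = -bet j i := abs_of_nonpos hbetle
            nlinarith [le_max_right (hfun i t) 0]
        rw [hlam_eq, div_mul_eq_mul_div, div_mul_eq_mul_div]
        exact (div_le_div_iff_of_pos_right hdi).2 hnum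
      have hsum_in : (∑ i ∈ J, lam i (x t) * bet j i) ≤ Kj j * f t := by
        calc (∑ i ∈ J, lam i (x t) * bet j i) ≤ ∑ i ∈ J, |bet j i| / d i * f t :=
              Finset.sum_le_sum hin_le
          _ = Kj j * f t := by rw [← Finset.sum_mul]
      calc D j t ≤ ∑ i, lam i (x t) * bet j i := step1
        _ = _ := hsplit
        _ ≤ 0 + Kj j * f t := add_le_add hout_le hsum_in
        _ = Kj j * f t := zero_add _
    have hsum : f' t ≤ ∑ j ∈ J, Kj j * f t := by
      refine Finset.sum_le_sum fun j hj => ?_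
      by_cases h1 : 0 < hfun j t
      · rw [if_pos h1]; exact hcore j hj h1.le
      · rw [if_neg h1]
        by_cases h2 : hfun j t = 0
        · rw [if_pos h2]
          exact max_le (hcore j hj h2.ge) (mul_nonneg (hKjnn j) (hf_nonneg t))
        · rw [if_neg h2]
          exact mul_nonneg (hKjnn j) (hf_nonneg t)
    rw [add_zero]
    calc f' t ≤ ∑ j ∈ J, Kj j * f t := hsum
      _ = K * f t := by rw [← Finset.sum_mul]
  have hfT : f T ≤ 0 := by
    have hz : ∀ j ∈ J, max (hfun j T) 0 = 0 := by
      intro j hj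
      have hj' : m j ⬝ᵥ x T = c j := (Finset.mem_filter.1 hj).2
      have hh : hfun j T = 0 := by
        show m j ⬝ᵥ x T - c j = 0
        rw [hj', sub_self]
      rw [hh, max_self]
    exact le_of_eq (Finset.sum_eq_zero hz)
  have hgron := le_gronwallBound_of_liminf_deriv_right_le (f := f) (f' := f')
    (δ := 0) (K := K) (ε := 0) (a := T) (b := Tb) hfc
    (fun t ht r hr => ((slope_tendsto t ht).eventually_lt_const hr).frequently)
    hfT hbound
  -- final contradiction
  set t0 : ℝ := T + min δ ε / 2 with ht0_def
  have hmin : 0 < min δ ε := lt_min hδpos hεpos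
  have ht0I : t0 ∈ Set.Icc T Tb := by
    constructor
    · have := hmin; simp only [ht0_def]; linarith
    · have h1 := min_le_left δ ε
      show T + min δ ε / 2 ≤ T + δ
      linarith
  have hft0 : f t0 ≤ 0 := by
    have hg := hgron t0 ht0I
    rwa [gronwallBound_ε0_δ0] at hg
  have hJle : ∀ j ∈ J, m j ⬝ᵥ x t0 ≤ c j := by
    intro j hj
    have h1 : max (hfun j t0) 0 ≤ 0 := le_trans (hterm_le t0 j hj) hft0
    have h2 : hfun j t0 ≤ 0 := le_trans (le_max_left _ _) h1
    have h3 : m j ⬝ᵥ x t0 - c j ≤ 0 := h2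
    linarith
  have hxt0S : x t0 ∈ S := by
    refine memS_of _ fun i => ?_
    by_cases hi : i ∈ J
    · exact (hiff i _).1 (hJle i hi)
    · exact (hiff i _).1 (hδ t0 ht0I i hi).le
  refine hout t0 ⟨?_, ?_⟩ hxt0S
  · show T < T + min δ ε / 2
    linarith
  · have h2 := min_le_right δ ε
    show T + min δ ε / 2 < T + ε
    linarith
end
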